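/- An element x of g(γ,Q) is locally finite (meaning that for every y∈g the span of {(ad x)^k y : k≥1} is finite dimensional) if and only if x∈ℂL_0; that is, the set of locally finite elements of g(γ,Q) is exactly ℂL_0. -/
import Mathlib


open scoped BigOperators

namespace QTorus

/-- σ(m,n) = ∏_{i<j} q_{ji}^{m_j n_i}. -/
noncomputable def qsigma (d : ℕ) (Q : Matrix (Fin d) (Fin d) ℂ) (m n : Fin d → ℤ) : ℂ :=
  ∏ i : Fin d, ∏ j : Fin d, if i < j then Q j i ^ (m j * n i) else 1

/-- The radical subgroup R = {m | σ(m,n)=σ(n,m) for all n}. -/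
def Rset (d : ℕ) (Q : Matrix (Fin d) (Fin d) ℂ) : Set (Fin d → ℤ) :=
  {m | ∀ n : Fin d → ℤ, qsigma d Q m n = qsigma d Q n m}

/-- (γ|m) = ∑ γ_i m_i. -/
noncomputable def ip (d : ℕ) (γ : Fin d → ℂ) (m : Fin d → ℤ) : ℂ :=
  ∑ i : Fin d, γ i * (m i : ℂ)

/-- The underlying vector space of g(γ,Q): formal ℂ-linear combinations of basis
vectors indexed by ℤ^d. -/
abbrev g (d : ℕ) := (Fin d → ℤ) →₀ ℂ

/-- The basis vector L_m. -/
noncomputable def L (d : ℕ) (m : Fin d → ℤ) : g d := Finsupp.single m 1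

/-- Hypotheses on the matrix Q: nonzero entries, q_{ii}=1, q_{ij}q_{ji}=1. -/
def QOk (d : ℕ) (Q : Matrix (Fin d) (Fin d) ℂ) : Prop :=
  (∀ i, Q i i = 1) ∧ (∀ i j, Q i j * Q j i = 1) ∧ (∀ i j, Q i j ≠ 0)

/-- γ is generic: γ_1,…,γ_d are linearly independent over ℚ. -/
def Generic (d : ℕ) (γ : Fin d → ℂ) : Prop := LinearIndependent ℚ γ

open Classical in
/-- Structure constants of g(γ,Q): [L_m, L_n] = sc(m,n) • L_{m+n}. -/
noncomputable def sc (d : ℕ) (Q : Matrix (Fin d) (Fin d) ℂ) (γ : Fin d → ℂ)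
    (m n : Fin d → ℤ) : ℂ :=
  if m ∈ Rset d Q then
    (if n ∈ Rset d Q then qsigma d Q m n * ip d γ (n - m)
     else qsigma d Q m n * ip d γ n)
  else
    (if n ∈ Rset d Q then -(qsigma d Q n m * ip d γ m)
     else qsigma d Q m n - qsigma d Q n m)

/-- The bracket of g(γ,Q), as the bilinear extension of
[L_m, L_n] = sc(m,n) • L_{m+n}. -/
noncomputable def br (d : ℕ) (Q : Matrix (Fin d) (Fin d) ℂ) (γ : Fin d → ℂ)
    (x y : g d) : g d :=
  x.sum fun m a => y.sum fun n b => Finsupp.single (m + n) (a * b * sc d Q γ m n)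

/-- A Lie algebra automorphism of g(γ,Q): a linear equivalence preserving the bracket. -/
def IsAut (d : ℕ) (Q : Matrix (Fin d) (Fin d) ℂ) (γ : Fin d → ℂ)
    (θ : g d ≃ₗ[ℂ] g d) : Prop :=
  ∀ x y : g d, θ (br d Q γ x y) = br d Q γ (θ x) (θ y)

/-- A derivation of g(γ,Q). -/
def IsDer (d : ℕ) (Q : Matrix (Fin d) (Fin d) ℂ) (γ : Fin d → ℂ)
    (D : g d →ₗ[ℂ] g d) : Prop :=
  ∀ x y : g d, D (br d Q γ x y) = br d Q γ (D x) y + br d Q γ x (D y)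

open Classical in
/-- δ(n,R) = 1 if n ∈ R, 0 otherwise. -/
noncomputable def deltaR (d : ℕ) (Q : Matrix (Fin d) (Fin d) ℂ) (n : Fin d → ℤ) : ℕ :=
  if n ∈ Rset d Q then 1 else 0

/-- A 2-cocycle on g(γ,Q). -/
def IsCocycle (d : ℕ) (Q : Matrix (Fin d) (Fin d) ℂ) (γ : Fin d → ℂ)
    (α : g d →ₗ[ℂ] g d →ₗ[ℂ] ℂ) : Prop :=
  (∀ x y : g d, α x y = - α y x) ∧
  (∀ x y z : g d,
    α (br d Q γ x y) z + α (br d Q γ z x) y + α (br d Q γ y z) x = 0)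

/-- i ↔ j is one of the exceptional index pairs (2l-1,2l) (1-based) of the rational
normal form. Here indices are 0-based. -/
def OffDiagPair (z : ℕ) (i j : ℕ) : Prop :=
  ∃ l : ℕ, l < z ∧ ((i = 2 * l ∧ j = 2 * l + 1) ∨ (i = 2 * l + 1 ∧ j = 2 * l))

/-- Q is in rational normal form with parameters z and k_1,…,k_d (0-based indexing:
the paper's pair (2i-1,2i) is the Lean pair (2l, 2l+1) with l = i-1). -/
def IsRNF (d : ℕ) (Q : Matrix (Fin d) (Fin d) ℂ) (z : ℕ) (k : Fin d → ℕ) : Prop :=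
  0 < z ∧ 2 * z ≤ d ∧
  (∀ i j : Fin d, ¬ OffDiagPair z i.val j.val → Q i j = 1) ∧
  (∀ (l : ℕ) (_ : l < z) (hi : 2 * l < d) (hj : 2 * l + 1 < d),
      IsPrimitiveRoot (Q ⟨2 * l, hi⟩ ⟨2 * l + 1, hj⟩) (k ⟨2 * l, hi⟩) ∧
      Q ⟨2 * l + 1, hj⟩ ⟨2 * l, hi⟩ = (Q ⟨2 * l, hi⟩ ⟨2 * l + 1, hj⟩)⁻¹ ∧
      k ⟨2 * l + 1, hj⟩ = k ⟨2 * l, hi⟩ ∧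
      1 < k ⟨2 * l, hi⟩) ∧
  (∀ (i : ℕ) (_ : i + 1 < 2 * z) (h1 : i < d) (h2 : i + 1 < d),
      k ⟨i + 1, h2⟩ ∣ k ⟨i, h1⟩) ∧
  (∀ i : Fin d, 2 * z ≤ i.val → k i = 1)

/-- The vector k_1 e_1 ∈ ℤ^d. -/
noncomputable def k1e1 (d : ℕ) (k : Fin d → ℕ) (hd : 0 < d) : Fin d → ℤ :=
  Pi.single ⟨0, hd⟩ (k ⟨0, hd⟩ : ℤ)

/-- A 2-cocycle is normalized if α(L_{m-k₁e₁}, L_{k₁e₁})=0 for m ∈ R, m ≠ 2k₁e₁,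
α(L_0, L_{2k₁e₁})=0, α(L_0, L_s)=0 for s ∉ R, and α(L_m,L_n)=0 whenever m+n ≠ 0. -/
def IsNormalized (d : ℕ) (Q : Matrix (Fin d) (Fin d) ℂ) (k : Fin d → ℕ) (hd : 0 < d)
    (α : g d →ₗ[ℂ] g d →ₗ[ℂ] ℂ) : Prop :=
  (∀ m ∈ Rset d Q, m ≠ 2 • k1e1 d k hd →
      α (L d (m - k1e1 d k hd)) (L d (k1e1 d k hd)) = 0) ∧
  α (L d 0) (L d (2 • k1e1 d k hd)) = 0 ∧
  (∀ s, s ∉ Rset d Q → α (L d 0) (L d s) = 0) ∧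
  (∀ m n : Fin d → ℤ, m + n ≠ 0 → α (L d m) (L d n) = 0)

/-- The degree derivation ∂_i, acting by ∂_i(L_m) = m_i L_m. -/
noncomputable def deg (d : ℕ) (i : Fin d) (y : g d) : g d :=
  y.sum fun m a => Finsupp.single m ((m i : ℂ) * a)

open Classical in
/-- The 2-cocycle α₁: α₁(L_m,L_n) = δ_{m+n,0}((m_γ)³-m_γ)/12 for m ∈ R, 0 otherwise,
where m_γ = (γ|m)/(γ|k₁e₁). -/
noncomputable def alpha1 (d : ℕ) (Q : Matrix (Fin d) (Fin d) ℂ) (γ : Fin d → ℂ)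
    (k : Fin d → ℕ) (hd : 0 < d) (x y : g d) : ℂ :=
  x.sum fun m a => y.sum fun n b => a * b *
    (if m ∈ Rset d Q ∧ m + n = 0 then
       ((ip d γ m / ip d γ (k1e1 d k hd)) ^ 3 - ip d γ m / ip d γ (k1e1 d k hd)) / 12
     else 0)

open Classical in
/-- The 2-cocycle α₂: α₂(L_r,L_s) = δ_{r+s,0} σ(r,-r)(γ|r)/(γ|k₁e₁) for r ∉ R,
0 otherwise. -/
noncomputable def alpha2 (d : ℕ) (Q : Matrix (Fin d) (Fin d) ℂ) (γ : Fin d → ℂ)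
    (k : Fin d → ℕ) (hd : 0 < d) (x y : g d) : ℂ :=
  x.sum fun m a => y.sum fun n b => a * b *
    (if m ∉ Rset d Q ∧ m + n = 0 then
       qsigma d Q m (-m) * (ip d γ m / ip d γ (k1e1 d k hd))
     else 0)

end QTorus

open QTorus

namespace QTorus

lemma qsigma_ne_zero (hQ : QOk d Q) (m n : Fin d → ℤ) : qsigma d Q m n ≠ 0 := by
  unfold qsigma
  rw [Finset.prod_ne_zero_iff]
  intro i _
  rw [Finset.prod_ne_zero_iff]
  intro j _
  split
  · exact zpow_ne_zero _ (hQ.2.2 j i)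
  · exact one_ne_zero

lemma qsigma_add_right (hQ : QOk d Q) (m n n' : Fin d → ℤ) :
    qsigma d Q m (n + n') = qsigma d Q m n * qsigma d Q m n' := by
  unfold qsigma
  rw [← Finset.prod_mul_distrib]
  refine Finset.prod_congr rfl fun i _ => ?_
  rw [← Finset.prod_mul_distrib]
  refine Finset.prod_congr rfl fun j _ => ?_
  split
  · rw [Pi.add_apply, mul_add, zpow_add₀ (hQ.2.2 j i)]
  · rw [one_mul]

lemma qsigma_add_left (hQ : QOk d Q) (m m' n : Fin d → ℤ) :
    qsigma d Q (m + m') n = qsigma d Q m n * qsigma d Q m' n := by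
  unfold qsigma
  rw [← Finset.prod_mul_distrib]
  refine Finset.prod_congr rfl fun i _ => ?_
  rw [← Finset.prod_mul_distrib]
  refine Finset.prod_congr rfl fun j _ => ?_
  split
  · rw [Pi.add_apply, add_mul, zpow_add₀ (hQ.2.2 j i)]
  · rw [one_mul]

lemma qsigma_zero_right (m : Fin d → ℤ) : qsigma d Q m 0 = 1 := by
  unfold qsigma
  refine Finset.prod_eq_one fun i _ => Finset.prod_eq_one fun j _ => ?_
  split
  · simp
  · rfl

lemma qsigma_zero_left (n : Fin d → ℤ) : qsigma d Q 0 n = 1 := by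
  unfold qsigma
  refine Finset.prod_eq_one fun i _ => Finset.prod_eq_one fun j _ => ?_
  split
  · simp
  · rfl

lemma qsigma_nsmul_right (hQ : QOk d Q) (m n : Fin d → ℤ) (k : ℕ) :
    qsigma d Q m (k • n) = qsigma d Q m n ^ k := by
  induction k with
  | zero => simpa using qsigma_zero_right m
  | succ k ih => rw [succ_nsmul, qsigma_add_right hQ, ih, pow_succ]

lemma qsigma_nsmul_left (hQ : QOk d Q) (m n : Fin d → ℤ) (k : ℕ) :
    qsigma d Q (k • m) n = qsigma d Q m n ^ k := by
  induction k with
  | zero => simpa using qsigma_zero_left n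
  | succ k ih => rw [succ_nsmul, qsigma_add_left hQ, ih, pow_succ]

lemma Rset_add (hQ : QOk d Q) {m m' : Fin d → ℤ} (h : m ∈ Rset d Q) (h' : m' ∈ Rset d Q) :
    m + m' ∈ Rset d Q := by
  intro n
  rw [qsigma_add_left hQ, qsigma_add_right hQ, h n, h' n]

lemma Rset_nsmul (hQ : QOk d Q) {m : Fin d → ℤ} (h : m ∈ Rset d Q) (k : ℕ) :
    k • m ∈ Rset d Q := by
  induction k with
  | zero =>
    intro n
    simp only [zero_smul]
    rw [qsigma_zero_left, qsigma_zero_right]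
  | succ k ih => rw [succ_nsmul]; exact Rset_add hQ ih h

lemma ip_ne_zero (hγ : Generic d γ) {m : Fin d → ℤ} (hm : m ≠ 0) : ip d γ m ≠ 0 := by
  intro h
  apply hm
  have := Fintype.linearIndependent_iff.1 hγ (fun i => (m i : ℚ)) ?_
  · funext i
    have := this i
    exact_mod_cast this
  · rw [← h]
    unfold ip
    refine Finset.sum_congr rfl fun i _ => ?_
    rw [Rat.smul_def]
    push_cast
    ring

lemma ip_nsmul (m : Fin d → ℤ) (k : ℕ) : ip d γ (k • m) = (k : ℂ) * ip d γ m := by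
  unfold ip
  rw [Finset.mul_sum]
  refine Finset.sum_congr rfl fun i _ => ?_
  simp only [Pi.smul_apply, nsmul_eq_mul]
  push_cast
  ring

end QTorus

namespace QTorus
namespace Stmt3Aux

variable {d : ℕ} {Q : Matrix (Fin d) (Fin d) ℂ} {γ : Fin d → ℂ}

lemma sc_mem_mem {m n : Fin d → ℤ} (hm : m ∈ Rset d Q) (hn : n ∈ Rset d Q) :
    sc d Q γ m n = qsigma d Q m n * ip d γ (n - m) := by
  unfold sc; rw [if_pos hm, if_pos hn]

lemma sc_not_not {m n : Fin d → ℤ} (hm : m ∉ Rset d Q) (hn : n ∉ Rset d Q) :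
    sc d Q γ m n = qsigma d Q m n - qsigma d Q n m := by
  unfold sc; rw [if_neg hm, if_neg hn]

lemma exists_good_n (hQ : QOk d Q) (hγ : Generic d γ) {m : Fin d → ℤ} (hm : m ≠ 0) :
    ∃ n : Fin d → ℤ, ∀ k : ℕ, sc d Q γ m (n + k • m) ≠ 0 := by
  by_cases hR : m ∈ Rset d Q
  · refine ⟨2 • m, fun k => ?_⟩
    have hs : (2 • m : Fin d → ℤ) + k • m = (2 + k) • m := by rw [add_nsmul]
    have hsR : (2 • m : Fin d → ℤ) + k • m ∈ Rset d Q := by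
      rw [hs]; exact Rset_nsmul hQ hR _
    rw [sc_mem_mem hR hsR]
    apply mul_ne_zero (qsigma_ne_zero hQ _ _)
    have hsub : (2 • m : Fin d → ℤ) + k • m - m = (1 + k) • m := by
      funext i
      simp only [Pi.add_apply, Pi.sub_apply, Pi.smul_apply, smul_eq_mul]
      push_cast; ring
    rw [hsub, ip_nsmul]
    apply mul_ne_zero
    · exact Nat.cast_ne_zero.2 (by omega)
    · exact ip_ne_zero hγ hm
  · have : ¬ ∀ n, qsigma d Q m n = qsigma d Q n m := hR
    push_neg at this
    obtain ⟨n, hn⟩ := this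
    refine ⟨n, fun k => ?_⟩
    have h1 : qsigma d Q m (n + k • m) = qsigma d Q m n * qsigma d Q m m ^ k := by
      rw [qsigma_add_right hQ, qsigma_nsmul_right hQ]
    have h2 : qsigma d Q (n + k • m) m = qsigma d Q n m * qsigma d Q m m ^ k := by
      rw [qsigma_add_left hQ, qsigma_nsmul_left hQ]
    have hneq : qsigma d Q m (n + k • m) ≠ qsigma d Q (n + k • m) m := by
      rw [h1, h2]
      intro h
      exact hn (mul_right_cancel₀ (pow_ne_zero _ (qsigma_ne_zero hQ m m)) h)
    have hsnot : n + k • m ∉ Rset d Q := fun hs => hneq (hs m).symm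
    rw [sc_not_not hR hsnot]
    exact sub_ne_zero.2 hneq

lemma br_apply (x w : g d) (p : Fin d → ℤ) :
    br d Q γ x w p = ∑ m ∈ x.support, ∑ q ∈ w.support,
      (if m + q = p then x m * w q * sc d Q γ m q else 0) := by
  unfold br
  rw [Finsupp.sum_apply, Finsupp.sum]
  refine Finset.sum_congr rfl fun m _ => ?_
  rw [Finsupp.sum_apply, Finsupp.sum]
  refine Finset.sum_congr rfl fun q _ => ?_
  exact Finsupp.single_apply

lemma support_br {x w : g d} {p : Fin d → ℤ} (hp : p ∈ (br d Q γ x w).support) :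
    ∃ m ∈ x.support, ∃ q ∈ w.support, p = m + q := by
  by_contra h
  push_neg at h
  apply Finsupp.mem_support_iff.1 hp
  rw [br_apply]
  refine Finset.sum_eq_zero fun m hm => Finset.sum_eq_zero fun q hq => ?_
  rw [if_neg]
  intro heq
  exact h m hm q hq heq.symm

/-- The linear functional v ↦ ∑ c i * v i. -/
def fc (c : Fin d → ℤ) (v : Fin d → ℤ) : ℤ := ∑ i : Fin d, c i * v i

lemma fc_add (c u v : Fin d → ℤ) : fc c (u + v) = fc c u + fc c v := by
  unfold fc
  rw [← Finset.sum_add_distrib]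
  exact Finset.sum_congr rfl fun i _ => by rw [Pi.add_apply, mul_add]

lemma fc_nsmul (c v : Fin d → ℤ) (k : ℕ) : fc c (k • v) = k * fc c v := by
  unfold fc
  rw [Finset.mul_sum]
  exact Finset.sum_congr rfl fun i _ => by
    simp only [Pi.smul_apply, smul_eq_mul]; ring

lemma fc_zero (c : Fin d → ℤ) : fc c 0 = 0 := by
  unfold fc; simp

lemma br_top (x w : g d) (c mstar p : Fin d → ℤ)
    (hmem : mstar ∈ x.support)
    (hmax : ∀ m ∈ x.support, fc c m ≤ fc c mstar)
    (hinj : ∀ m ∈ x.support, fc c m = fc c mstar → m = mstar)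
    (hw : ∀ q ∈ w.support, fc c q ≤ fc c p ∧ (fc c q = fc c p → q = p)) :
    br d Q γ x w (mstar + p) = x mstar * w p * sc d Q γ mstar p := by
  rw [br_apply]
  rw [Finset.sum_eq_single_of_mem mstar hmem]
  · by_cases hp : p ∈ w.support
    · rw [Finset.sum_eq_single_of_mem p hp]
      · rw [if_pos rfl]
      · intro q hq hqp
        rw [if_neg]
        intro heq
        exact hqp (add_left_cancel heq)
    · rw [Finsupp.notMem_support_iff.1 hp]
      rw [Finset.sum_eq_zero]
      · ring
      · intro q hq
        rw [if_neg]
        intro heq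
        have := (hw q hq).2
        have hqp : q = p := this (by
          have h1 := (hw q hq).1
          have := congrArg (fc c) heq
          rw [fc_add, fc_add] at this
          omega)
        exact hp (hqp ▸ hq)
  · intro m hm hmne
    refine Finset.sum_eq_zero fun q hq => ?_
    rw [if_neg]
    intro heq
    have h1 := hmax m hm
    have h2 : fc c m ≠ fc c mstar := fun h => hmne (hinj m hm h)
    have h3 := (hw q hq).1
    have := congrArg (fc c) heq
    rw [fc_add, fc_add] at this
    omega

lemma base_rep : ∀ (e : ℕ) (N : ℤ) (w : Fin e → ℤ), (∀ i, |w i| < N) →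
    (∑ i : Fin e, N ^ (i : ℕ) * w i) = 0 → ∀ i, w i = 0 := by
  intro e
  induction e with
  | zero => intro N w _ _ i; exact i.elim0
  | succ e ih =>
    intro N w hb hs i
    have hN : 0 < N := lt_of_le_of_lt (abs_nonneg _) (hb 0)
    rw [Fin.sum_univ_succ] at hs
    simp only [Fin.val_zero, pow_zero, one_mul] at hs
    have hfac : (∑ i : Fin e, N ^ ((i.succ : Fin (e+1)) : ℕ) * w i.succ)
        = N * ∑ i : Fin e, N ^ (i : ℕ) * w i.succ := by
      rw [Finset.mul_sum]
      refine Finset.sum_congr rfl fun j _ => ?_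
      rw [Fin.val_succ, pow_succ]
      ring
    rw [hfac] at hs
    have h0 : w 0 = 0 := by
      have ht : w 0 = N * (-(∑ i : Fin e, N ^ (i : ℕ) * w i.succ)) := by ring_nf; linarith [hs]
      have habs : |w 0| = N * |(-(∑ i : Fin e, N ^ (i : ℕ) * w i.succ))| := by
        rw [ht, abs_mul, abs_of_pos hN]
      have hlt : N * |(-(∑ i : Fin e, N ^ (i : ℕ) * w i.succ))| < N * 1 := by
        rw [← habs, mul_one]; exact hb 0
      have : |(-(∑ i : Fin e, N ^ (i : ℕ) * w i.succ))| < 1 := lt_of_mul_lt_mul_left hlt (le_of_lt hN)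
      have hz : (-(∑ i : Fin e, N ^ (i : ℕ) * w i.succ)) = 0 := Int.abs_lt_one_iff.1 this
      rw [ht, hz, mul_zero]
    have hsum0 : (∑ i : Fin e, N ^ (i : ℕ) * w i.succ) = 0 := by
      rw [h0] at hs
      have : N * (∑ i : Fin e, N ^ (i : ℕ) * w i.succ) = 0 := by linarith
      exact (mul_eq_zero.1 this).resolve_left (by omega)
    have := ih N (fun j => w j.succ) (fun j => hb j.succ) hsum0
    cases i using Fin.cases with
    | zero => exact h0
    | succ j => exact this j

lemma exists_c {d : ℕ} (T : Finset (Fin d → ℤ)) :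
    ∃ c : Fin d → ℤ, ∀ u ∈ T, ∀ v ∈ T,
      (∑ i : Fin d, c i * u i) = (∑ i : Fin d, c i * v i) → u = v := by
  set M : ℕ := T.sup fun u => Finset.univ.sup fun i => (u i).natAbs with hM
  set N : ℤ := 2 * M + 1 with hN
  refine ⟨fun i => N ^ (i : ℕ), fun u hu v hv huv => ?_⟩
  have hbound : ∀ w ∈ T, ∀ i, |w i| ≤ (M : ℤ) := by
    intro w hw i
    have h2 : (Finset.univ.sup fun i => (w i).natAbs) ≤ M :=
      Finset.le_sup (f := fun u => Finset.univ.sup fun i => (u i).natAbs) hw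
    have h1 : (w i).natAbs ≤ Finset.univ.sup fun i => (w i).natAbs :=
      Finset.le_sup (f := fun i => (w i).natAbs) (Finset.mem_univ i)
    rw [Int.abs_eq_natAbs]
    exact_mod_cast le_trans h1 h2
  have key := base_rep d N (u - v) ?_ ?_
  · have : u - v = 0 := funext fun i => key i
    exact sub_eq_zero.1 this
  · intro i
    have h1 := hbound u hu i
    have h2 := hbound v hv i
    have h3 : |u i - v i| ≤ |u i| + |v i| := by
      have := abs_add_le (u i) (-(v i))
      simpa [sub_eq_add_neg, abs_neg] using this
    simp only [Pi.sub_apply]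
    rw [hN]
    linarith
  · have : ∑ i : Fin d, N ^ (i : ℕ) * (u - v) i
        = (∑ i : Fin d, N ^ (i : ℕ) * u i) - (∑ i : Fin d, N ^ (i : ℕ) * v i) := by
      rw [← Finset.sum_sub_distrib]
      exact Finset.sum_congr rfl fun i _ => by rw [Pi.sub_apply, mul_sub]
    rw [this, huv, sub_self]

lemma fc_neg (c v : Fin d → ℤ) : fc (-c) v = - fc c v := by
  unfold fc
  rw [← Finset.sum_neg_distrib]
  exact Finset.sum_congr rfl fun i _ => by simp [neg_mul]

lemma iter_props (hQ : QOk d Q) (x : g d) (c mstar n : Fin d → ℤ)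
    (hmem : mstar ∈ x.support)
    (hmax : ∀ m ∈ x.support, fc c m ≤ fc c mstar)
    (hinj : ∀ m ∈ x.support, fc c m = fc c mstar → m = mstar)
    (hsc : ∀ k : ℕ, sc d Q γ mstar (n + k • mstar) ≠ 0) :
    ∀ k : ℕ,
      (∀ q ∈ ((fun w => br d Q γ x w)^[k] (L d n)).support,
        fc c q ≤ fc c n + k * fc c mstar ∧
        (fc c q = fc c n + k * fc c mstar → q = n + k • mstar)) ∧
      ((fun w => br d Q γ x w)^[k] (L d n)) (n + k • mstar) ≠ 0 := by
  intro k
  induction k with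
  | zero =>
    constructor
    · intro q hq
      simp only [Function.iterate_zero, id_eq] at hq
      rw [L, Finsupp.support_single_ne_zero n one_ne_zero, Finset.mem_singleton] at hq
      subst hq
      refine ⟨by simp, fun _ => by simp⟩
    · simp [L, Finsupp.single_apply]
  | succ k ih =>
    have hstep : (fun w => br d Q γ x w)^[k+1] (L d n)
        = br d Q γ x ((fun w => br d Q γ x w)^[k] (L d n)) :=
      Function.iterate_succ_apply' _ _ _
    set w := (fun w => br d Q γ x w)^[k] (L d n) with hw
    have hwprop := ih.1
    have hfcp : fc c (n + k • mstar) = fc c n + k * fc c mstar := by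
      rw [fc_add, fc_nsmul]
    constructor
    · intro q hq
      rw [hstep] at hq
      obtain ⟨m, hm, q', hq', rfl⟩ := support_br hq
      have h1 := hmax m hm
      have h2 := (hwprop q' hq').1
      rw [fc_add]
      constructor
      · push_cast
        linarith
      · intro heq
        have hm' : fc c m = fc c mstar := by push_cast at heq h1 h2 ⊢; linarith
        have hq'' : fc c q' = fc c n + k * fc c mstar := by
          push_cast at heq h1 h2 ⊢; linarith
        rw [hinj m hm hm', (hwprop q' hq').2 hq'', succ_nsmul]
        abel
    · have hpt : n + (k+1) • mstar = mstar + (n + k • mstar) := by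
        rw [succ_nsmul]; abel
      rw [hstep, hpt]
      rw [br_top x w c mstar (n + k • mstar) hmem hmax hinj
        (fun q hq => by rw [hfcp]; exact hwprop q hq)]
      exact mul_ne_zero (mul_ne_zero (Finsupp.mem_support_iff.1 hmem) ih.2) (hsc k)

lemma li_tri {v : ℕ → g d} {pt : ℕ → (Fin d → ℤ)}
    (h1 : ∀ k, v k (pt k) ≠ 0) (h2 : ∀ j k, j < k → v j (pt k) = 0) :
    LinearIndependent ℂ v := by
  rw [linearIndependent_iff']
  intro s gc
  induction s using Finset.strongInduction with
  | _ s ih =>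
    intro hsum k hk
    have hne : s.Nonempty := ⟨k, hk⟩
    have hmax := s.max'_mem hne
    set k0 := s.max' hne with hk0
    have hg0 : gc k0 = 0 := by
      have happ := congrArg (fun z : g d => z (pt k0)) hsum
      simp only [Finsupp.finset_sum_apply, Finsupp.smul_apply, smul_eq_mul,
        Finsupp.coe_zero, Pi.zero_apply] at happ
      rw [Finset.sum_eq_single_of_mem k0 hmax] at happ
      · exact (mul_eq_zero.1 happ).resolve_right (h1 k0)
      · intro j hj hjne
        rw [h2 j k0 (lt_of_le_of_ne (s.le_max' j hj) hjne), mul_zero]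
    by_cases hkk : k = k0
    · rw [hkk]; exact hg0
    · refine ih (s.erase k0) (Finset.erase_ssubset hmax) ?_ k (Finset.mem_erase.2 ⟨hkk, hk⟩)
      rw [Finset.sum_erase _ (by rw [hg0, zero_smul])]
      exact hsum

lemma not_lf (hQ : QOk d Q) (hγ : Generic d γ) (x : g d) (c : Fin d → ℤ)
    (hinj : ∀ u ∈ x.support, ∀ v ∈ x.support, fc c u = fc c v → u = v)
    (m0 : Fin d → ℤ) (hm0 : m0 ∈ x.support) (hpos : 0 < fc c m0)
    (h : ∀ y : g d, FiniteDimensional ℂ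
        (Submodule.span ℂ {v : g d | ∃ k : ℕ, 1 ≤ k ∧ (fun w => br d Q γ x w)^[k] y = v})) :
    False := by
  obtain ⟨mstar, hms, hmax⟩ := Finset.exists_max_image x.support (fc c) ⟨m0, hm0⟩
  have hposs : 0 < fc c mstar := lt_of_lt_of_le hpos (hmax m0 hm0)
  have hmsne : mstar ≠ 0 := by
    rintro rfl
    rw [fc_zero] at hposs
    exact lt_irrefl _ hposs
  obtain ⟨n, hsc⟩ := exists_good_n hQ hγ hmsne
  have hiter := iter_props hQ x c mstar n hms hmax
    (fun m hm hfcm => hinj m hm mstar hms hfcm) hsc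
  set v : ℕ → g d := fun k => (fun w => br d Q γ x w)^[k] (L d n) with hv
  have hli : LinearIndependent ℂ (fun k : ℕ => v (k+1)) := by
    apply li_tri (pt := fun k => n + (k+1) • mstar)
    · intro k
      exact (hiter (k+1)).2
    · intro j k hjk
      by_contra hz
      have hmemz := Finsupp.mem_support_iff.2 hz
      have hb := ((hiter (j+1)).1 _ hmemz).1
      rw [fc_add, fc_nsmul] at hb
      have hlt : ((j:ℤ)+1) * fc c mstar < ((k:ℤ)+1) * fc c mstar := by
        apply mul_lt_mul_of_pos_right _ hposs
        push_cast
        omega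
      push_cast at hb
      linarith
  have hfd := h (L d n)
  have hmemV : ∀ k : ℕ, v (k+1) ∈ Submodule.span ℂ
      {w : g d | ∃ k : ℕ, 1 ≤ k ∧ (fun w => br d Q γ x w)^[k] (L d n) = w} := fun k =>
    Submodule.subset_span ⟨k+1, by omega, rfl⟩
  have h1 : Submodule.span ℂ (Set.range fun k : ℕ => v (k+1)) ≤ Submodule.span ℂ
      {w : g d | ∃ k : ℕ, 1 ≤ k ∧ (fun w => br d Q γ x w)^[k] (L d n) = w} :=
    Submodule.span_le.2 (by rintro _ ⟨k, rfl⟩; exact hmemV k)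
  haveI := Submodule.finiteDimensional_of_le h1
  have h2 := rank_span hli
  have h3 := Module.rank_lt_aleph0 ℂ ↥(Submodule.span ℂ (Set.range fun k : ℕ => v (k+1)))
  rw [h2, Cardinal.mk_range_eq _ hli.injective, Cardinal.mk_nat] at h3
  exact lt_irrefl _ h3
end Stmt3Aux
end QTorus


/-- x ∈ g(γ,Q) is locally finite (for every y the span of
{(ad x)^k y : k ≥ 1} is finite dimensional) iff x ∈ ℂL_0. -/
theorem stmt3 (d : ℕ) (hd : 1 < d) (Q : Matrix (Fin d) (Fin d) ℂ) (hQ : QOk d Q)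
    (γ : Fin d → ℂ) (hγ : Generic d γ) (x : g d) :
    (∀ y : g d, FiniteDimensional ℂ
        (Submodule.span ℂ {v : g d | ∃ k : ℕ, 1 ≤ k ∧ (fun w => br d Q γ x w)^[k] y = v}))
    ↔ ∃ c : ℂ, x = c • L d 0 := by

  constructor
  · intro h
    by_cases hsupp : x.support ⊆ ({0} : Finset (Fin d → ℤ))
    · refine ⟨x 0, ?_⟩
      rw [L, Finsupp.smul_single', mul_one]
      exact Finsupp.eq_single_iff.2 ⟨hsupp, rfl⟩
    · exfalso
      obtain ⟨m0, hm0, hm0ne⟩ : ∃ m0 ∈ x.support, m0 ≠ 0 := by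
        by_contra hc
        push_neg at hc
        exact hsupp fun a ha => Finset.mem_singleton.2 (hc a ha)
      obtain ⟨c0, hc0⟩ := Stmt3Aux.exists_c (insert 0 x.support)
      have hinj : ∀ u ∈ x.support, ∀ v ∈ x.support,
          Stmt3Aux.fc c0 u = Stmt3Aux.fc c0 v → u = v :=
        fun u hu v hv he =>
          hc0 u (Finset.mem_insert_of_mem hu) v (Finset.mem_insert_of_mem hv) he
      have hfm0 : Stmt3Aux.fc c0 m0 ≠ 0 := by
        intro hz
        apply hm0ne
        refine hc0 m0 (Finset.mem_insert_of_mem hm0) 0 (Finset.mem_insert_self _ _) ?_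
        have h0 : Stmt3Aux.fc c0 (0 : Fin d → ℤ) = 0 := Stmt3Aux.fc_zero c0
        unfold Stmt3Aux.fc at hz h0
        rw [hz, h0]
      rcases hfm0.lt_or_gt with hneg | hpos
      · have hneg' : 0 < Stmt3Aux.fc (-c0) m0 := by
          rw [Stmt3Aux.fc_neg]
          omega
        have hinj' : ∀ u ∈ x.support, ∀ v ∈ x.support,
            Stmt3Aux.fc (-c0) u = Stmt3Aux.fc (-c0) v → u = v := by
          intro u hu v hv he
          rw [Stmt3Aux.fc_neg, Stmt3Aux.fc_neg, neg_inj] at he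
          exact hinj u hu v hv he
        exact Stmt3Aux.not_lf hQ hγ x (-c0) hinj' m0 hm0 hneg' h
      · exact Stmt3Aux.not_lf hQ hγ x c0 hinj m0 hm0 hpos h
  · rintro ⟨cc, rfl⟩ y
    have hxsup : (cc • L d 0 : g d).support ⊆ ({0} : Finset (Fin d → ℤ)) := by
      intro a ha
      have h1 := Finsupp.support_smul ha
      rw [L] at h1
      exact Finsupp.support_single_subset h1
    have hiter : ∀ k : ℕ,
        ((fun w => br d Q γ (cc • L d 0) w)^[k] y).support ⊆ y.support := by
      intro k
      induction k with
      | zero => simp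
      | succ k ih =>
        rw [Function.iterate_succ_apply']
        intro p hp
        obtain ⟨m, hm, q, hq, rfl⟩ := Stmt3Aux.support_br hp
        have hm0 : m = 0 := Finset.mem_singleton.1 (hxsup hm)
        subst hm0
        rw [zero_add]
        exact ih hq
    have hsub : {v : g d | ∃ k : ℕ, 1 ≤ k ∧ (fun w => br d Q γ (cc • L d 0) w)^[k] y = v}
        ⊆ ↑(Finsupp.supported ℂ ℂ (↑y.support : Set (Fin d → ℤ))) := by
      rintro v ⟨k, _, rfl⟩
      rw [SetLike.mem_coe, Finsupp.mem_supported]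
      exact_mod_cast hiter k
    haveI : FiniteDimensional ℂ ↥(Finsupp.supported ℂ ℂ (↑y.support : Set (Fin d → ℤ))) := by
      haveI : Fintype (↑y.support : Set (Fin d → ℤ)) := FinsetCoe.fintype _
      exact LinearEquiv.finiteDimensional
        ((Finsupp.supportedEquivFinsupp (↑y.support : Set (Fin d → ℤ))).trans
          (Finsupp.linearEquivFunOnFinite ℂ ℂ _)).symm
    exact Submodule.finiteDimensional_of_le (Submodule.span_le.2 hsub)
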